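/- arXiv:1301.6389 — 4 statements merged into one kernel-verified Lean document; each statement's English description precedes it below -/
import Mathlib

section
/- Integration by parts implies rapid decay of the characteristic function: Let (Ω, 𝒜, P) be a probability space and X : Ω → ℝ^d a random vector. Assume that for every n ≥ 1 and every finite sequence of indices i₁, …, i_n ∈ {1, …, d} there exists an integrable random variable Z ∈ L¹(P) such that E[(∂_{i_n} ⋯ ∂_{i₁} f)(X)] = E[f(X) · Z] for every smooth compactly supported function f : ℝ^d → ℝ. Then for every m ∈ ℕ there is a constant C_m such that |E[exp(i⟨ξ, X⟩)]| ≤ C_m (1 + ‖ξ‖)^{-m} for all ξ ∈ ℝ^d. -/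
open MeasureTheory

/-- Iterated partial derivatives along a list of coordinate indices:
`pderivList [i₁, …, iₙ] f = ∂_{iₙ} ⋯ ∂_{i₁} f` (the head of the list acts first,
i.e. innermost). -/
noncomputable def pderivList {d : ℕ} :
    List (Fin d) → (EuclideanSpace ℝ (Fin d) → ℝ) → (EuclideanSpace ℝ (Fin d) → ℝ)
  | [], f => f
  | i :: is, f => pderivList is (fun x => fderiv ℝ f x (EuclideanSpace.single i 1))

section Helpers

variable {d : ℕ}
local notation "E" => EuclideanSpace ℝ (Fin d)

noncomputable def dd (v : EuclideanSpace ℝ (Fin d)) (f : EuclideanSpace ℝ (Fin d) → ℝ) :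
    EuclideanSpace ℝ (Fin d) → ℝ := fun x => fderiv ℝ f x v

lemma contDiff_dd (v : E) {f : E → ℝ} (hf : ContDiff ℝ (⊤ : ℕ∞) f) :
    ContDiff ℝ (⊤ : ℕ∞) (dd v f) := by
  have h1 : ContDiff ℝ (⊤ : ℕ∞) (fderiv ℝ f) := hf.fderiv_right (by simp)
  exact h1.clm_apply contDiff_const

lemma contDiff_dd_iter (v : E) {f : E → ℝ} (hf : ContDiff ℝ (⊤ : ℕ∞) f) (m : ℕ) :
    ContDiff ℝ (⊤ : ℕ∞) ((dd v)^[m] f) := by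
  induction m generalizing f with
  | zero => exact hf
  | succ m ih => rw [Function.iterate_succ_apply]; exact ih (contDiff_dd v hf)

lemma dd_iter_eq_iteratedFDeriv (v : E) {f : E → ℝ} (hf : ContDiff ℝ (⊤ : ℕ∞) f) (m : ℕ)
    (x : E) : (dd v)^[m] f x = iteratedFDeriv ℝ m f x (fun _ => v) := by
  induction m generalizing f with
  | zero => simp [iteratedFDeriv_zero_apply]
  | succ m ih =>
    rw [Function.iterate_succ_apply, ih (contDiff_dd v hf)]
    have h1 : ContDiff ℝ (⊤ : ℕ∞) (fderiv ℝ f) := hf.fderiv_right (by simp)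
    have hcomp : dd v f = (ContinuousLinearMap.apply ℝ ℝ v) ∘ (fderiv ℝ f) := rfl
    rw [hcomp, ContinuousLinearMap.iteratedFDeriv_comp_left _ h1.contDiffAt (by exact_mod_cast le_top)]
    have hsnoc : (Fin.snoc (fun _ : Fin m => v) v : Fin (m+1) → E) = fun _ => v := by
      funext j
      induction j using Fin.lastCases with
      | last => simp
      | cast j => simp
    rw [show (fun _ : Fin (m+1) => v) = (Fin.snoc (fun _ : Fin m => v) v : Fin (m+1) → E)
      from hsnoc.symm]
    rw [iteratedFDeriv_succ_apply_right]
    simp [Fin.init_snoc, Fin.snoc_last]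

lemma pderivList_replicate (m : ℕ) (i : Fin d) (f : E → ℝ) :
    pderivList (List.replicate m i) f = (dd (EuclideanSpace.single i 1))^[m] f := by
  induction m generalizing f with
  | zero => rfl
  | succ m ih =>
    rw [List.replicate_succ]
    show pderivList (List.replicate m i) (dd (EuclideanSpace.single i 1) f) = _
    rw [ih, Function.iterate_succ_apply]

lemma trig_bound : ∀ k : ℕ, (∀ t : ℝ, ‖iteratedDeriv k Real.cos t‖ ≤ 1) ∧
    (∀ t : ℝ, ‖iteratedDeriv k Real.sin t‖ ≤ 1) := by
  intro k
  induction k with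
  | zero =>
    constructor <;> intro t <;> simp [Real.norm_eq_abs, Real.abs_cos_le_one, Real.abs_sin_le_one]
  | succ k ih =>
    constructor <;> intro t
    · rw [iteratedDeriv_succ', Real.deriv_cos']
      calc ‖iteratedDeriv k (fun x => -Real.sin x) t‖ = ‖-(iteratedDeriv k Real.sin t)‖ := by
            rw [iteratedDeriv_fun_neg]
        _ ≤ 1 := by rw [norm_neg]; exact ih.2 t
    · rw [iteratedDeriv_succ', Real.deriv_sin]
      exact ih.1 t

lemma norm_iteratedFDeriv_comp_clm_le {g : ℝ → ℝ} (hg : ContDiff ℝ (⊤ : ℕ∞) g)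
    (hgb : ∀ k t, ‖iteratedDeriv k g t‖ ≤ 1) (L : EuclideanSpace ℝ (Fin d) →L[ℝ] ℝ)
    (k : ℕ) (x : E) : ‖iteratedFDeriv ℝ k (g ∘ L) x‖ ≤ ‖L‖ ^ k := by
  rw [L.iteratedFDeriv_comp_right hg x (by exact_mod_cast le_top)]
  calc ‖(iteratedFDeriv ℝ k g (L x)).compContinuousLinearMap fun _ => L‖
      ≤ ‖iteratedFDeriv ℝ k g (L x)‖ * ∏ _i : Fin k, ‖L‖ :=
        ContinuousMultilinearMap.norm_compContinuousLinearMap_le _ _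
    _ ≤ 1 * ‖L‖ ^ k := by
        rw [Finset.prod_const, Finset.card_univ, Fintype.card_fin]
        apply mul_le_mul_of_nonneg_right _ (pow_nonneg (norm_nonneg L) k)
        rw [norm_iteratedFDeriv_eq_norm_iteratedDeriv]
        exact hgb k (L x)
    _ = ‖L‖ ^ k := one_mul _

section Bump
variable (b : ContDiffBump (0 : EuclideanSpace ℝ (Fin d)))

noncomputable def Mn (n : ℕ) : EuclideanSpace ℝ (Fin d) →L[ℝ] EuclideanSpace ℝ (Fin d) :=
  ((n + 1 : ℝ)⁻¹) • ContinuousLinearMap.id ℝ (EuclideanSpace ℝ (Fin d))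

lemma Mn_norm_le (n : ℕ) : ‖(Mn n : E →L[ℝ] E)‖ ≤ 1 := by
  unfold Mn
  calc ‖((n + 1 : ℝ)⁻¹) • ContinuousLinearMap.id ℝ (EuclideanSpace ℝ (Fin d))‖ ≤ ‖(n+1:ℝ)⁻¹‖ * ‖ContinuousLinearMap.id ℝ (EuclideanSpace ℝ (Fin d))‖ :=
        ContinuousLinearMap.opNorm_smul_le _ _
    _ ≤ 1 * 1 := by
        apply mul_le_mul _ ContinuousLinearMap.norm_id_le (norm_nonneg _) zero_le_one
        rw [Real.norm_eq_abs, abs_of_nonneg (by positivity)]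
        rw [inv_le_one_iff₀]
        right; linarith [Nat.cast_nonneg (α := ℝ) n]
    _ = 1 := one_mul 1

lemma chi_smooth (n : ℕ) : ContDiff ℝ (⊤ : ℕ∞) ((b : E → ℝ) ∘ (Mn n)) :=
  b.contDiff.comp (Mn n).contDiff

lemma chi_compact_support (n : ℕ) : HasCompactSupport ((b : E → ℝ) ∘ (Mn n)) := by
  have h : ((b : E → ℝ) ∘ (Mn n)) =
      (b : E → ℝ) ∘ (Homeomorph.smulOfNeZero ((n+1:ℝ)⁻¹) (by positivity)) := rfl
  rw [h]
  exact b.hasCompactSupport.comp_homeomorph _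

lemma chi_one (hb : 1 ≤ b.rIn) (n : ℕ) (x : E) (hx : ‖x‖ ≤ n + 1) :
    ((b : E → ℝ) ∘ (Mn n)) x = 1 := by
  apply b.one_of_mem_closedBall
  rw [Metric.mem_closedBall, dist_zero_right]
  show ‖(n+1:ℝ)⁻¹ • x‖ ≤ b.rIn
  rw [norm_smul, Real.norm_eq_abs, abs_of_nonneg (by positivity)]
  have h1 : (n + 1 : ℝ)⁻¹ * ‖x‖ ≤ 1 := by
    rw [inv_mul_le_iff₀ (by positivity)]
    linarith
  linarith

lemma chi_iFD_bound (j : ℕ) : ∃ K : ℝ, 0 ≤ K ∧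
    ∀ (n : ℕ) (x : E), ‖iteratedFDeriv ℝ j ((b : E → ℝ) ∘ (Mn n)) x‖ ≤ K := by
  obtain ⟨K0, hK0⟩ := (b.hasCompactSupport.iteratedFDeriv j).exists_bound_of_continuous
    (b.contDiff.continuous_iteratedFDeriv (by exact_mod_cast le_top))
  refine ⟨max K0 0, le_max_right _ _, fun n x => ?_⟩
  rw [(Mn n).iteratedFDeriv_comp_right b.contDiff x (by exact_mod_cast le_top)]
  calc ‖(iteratedFDeriv ℝ j (b : E → ℝ) ((Mn n) x)).compContinuousLinearMap fun _ => (Mn n)‖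
      ≤ ‖iteratedFDeriv ℝ j (b : E → ℝ) ((Mn n) x)‖ * ∏ _i : Fin j, ‖(Mn n : E →L[ℝ] E)‖ :=
        ContinuousMultilinearMap.norm_compContinuousLinearMap_le _ _
    _ ≤ max K0 0 * 1 := by
        apply mul_le_mul ((hK0 _).trans (le_max_left _ _)) _ (by positivity) (le_max_right _ _)
        calc ∏ _i : Fin j, ‖(Mn n : E →L[ℝ] E)‖ ≤ ∏ _i : Fin j, (1:ℝ) :=
              Finset.prod_le_prod (fun _ _ => norm_nonneg _) (fun _ _ => Mn_norm_le n)
          _ = 1 := Finset.prod_const_one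
    _ = max K0 0 := mul_one _
end Bump

lemma dd_smul (v : E) {f : E → ℝ} (hf : ContDiff ℝ (⊤ : ℕ∞) f) (a : ℝ) (m : ℕ) :
    (dd v)^[m] (fun x => a * f x) = fun x => a * (dd v)^[m] f x := by
  induction m generalizing f with
  | zero => rfl
  | succ m ih =>
    rw [Function.iterate_succ_apply, Function.iterate_succ_apply]
    have h : dd v (fun x => a * f x) = fun x => a * dd v f x := by
      funext x
      show fderiv ℝ (fun y => a * f y) x v = a * fderiv ℝ f x v
      rw [fderiv_const_mul (hf.differentiable (by simp)).differentiableAt a]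
      simp
    rw [h, ih (contDiff_dd v hf)]

lemma dd_cos_sin (ξ : E) (v : E) :
    (dd v (fun x => Real.cos ((inner ℝ ξ x : ℝ))) =
      fun x => -(inner ℝ ξ v : ℝ) * Real.sin ((inner ℝ ξ x : ℝ))) ∧
    (dd v (fun x => Real.sin ((inner ℝ ξ x : ℝ))) =
      fun x => (inner ℝ ξ v : ℝ) * Real.cos ((inner ℝ ξ x : ℝ))) := by
  have hL : ∀ x : E, HasFDerivAt (fun y : E => (inner ℝ ξ y : ℝ)) (innerSL ℝ ξ) x := fun x =>
    (innerSL ℝ ξ).hasFDerivAt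
  constructor
  · funext x
    have h1 : HasFDerivAt (fun y : E => Real.cos ((inner ℝ ξ y : ℝ)))
        ((-Real.sin ((inner ℝ ξ x : ℝ))) • (innerSL ℝ ξ : E →L[ℝ] ℝ)) x :=
      (Real.hasDerivAt_cos _).comp_hasFDerivAt x (hL x)
    show fderiv ℝ _ x v = _
    rw [h1.fderiv]
    simp [mul_comm]
  · funext x
    have h1 : HasFDerivAt (fun y : E => Real.sin ((inner ℝ ξ y : ℝ)))
        ((Real.cos ((inner ℝ ξ x : ℝ))) • (innerSL ℝ ξ : E →L[ℝ] ℝ)) x :=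
      (Real.hasDerivAt_sin _).comp_hasFDerivAt x (hL x)
    show fderiv ℝ _ x v = _
    rw [h1.fderiv]
    simp [mul_comm]

lemma cos_smooth (ξ : E) : ContDiff ℝ (⊤ : ℕ∞) (fun x : E => Real.cos ((inner ℝ ξ x : ℝ))) :=
  Real.contDiff_cos.comp (innerSL ℝ ξ).contDiff

lemma sin_smooth (ξ : E) : ContDiff ℝ (⊤ : ℕ∞) (fun x : E => Real.sin ((inner ℝ ξ x : ℝ))) :=
  Real.contDiff_sin.comp (innerSL ℝ ξ).contDiff

lemma aux_step (t θ : ℝ) (m : ℕ) :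
    (((Complex.I * (t:ℂ)) ^ (m+1) * Complex.exp (Complex.I * (θ:ℂ))).re =
      -t * ((Complex.I * (t:ℂ)) ^ m * Complex.exp (Complex.I * (θ:ℂ))).im) ∧
    (((Complex.I * (t:ℂ)) ^ (m+1) * Complex.exp (Complex.I * (θ:ℂ))).im =
      t * ((Complex.I * (t:ℂ)) ^ m * Complex.exp (Complex.I * (θ:ℂ))).re) := by
  have h : (Complex.I * (t:ℂ)) ^ (m+1) * Complex.exp (Complex.I * (θ:ℂ)) =
      (Complex.I * (t:ℂ)) * ((Complex.I * (t:ℂ)) ^ m * Complex.exp (Complex.I * (θ:ℂ))) := by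
    ring
  rw [h]
  set z := (Complex.I * (t:ℂ)) ^ m * Complex.exp (Complex.I * (θ:ℂ)) with hz
  constructor <;>
    simp [Complex.mul_re, Complex.mul_im] <;> ring

lemma dd_iter_cos_sin (ξ : E) (v : E) (m : ℕ) :
    ((dd v)^[m] (fun x => Real.cos ((inner ℝ ξ x : ℝ))) =
      fun x => ((Complex.I * ((inner ℝ ξ v : ℝ) : ℂ)) ^ m *
        Complex.exp (Complex.I * ((inner ℝ ξ x : ℝ) : ℂ))).re) ∧
    ((dd v)^[m] (fun x => Real.sin ((inner ℝ ξ x : ℝ))) =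
      fun x => ((Complex.I * ((inner ℝ ξ v : ℝ) : ℂ)) ^ m *
        Complex.exp (Complex.I * ((inner ℝ ξ x : ℝ) : ℂ))).im) := by
  induction m with
  | zero =>
    constructor <;> funext x <;> rw [Function.iterate_zero_apply, pow_zero, one_mul,
      mul_comm Complex.I (((inner ℝ ξ x : ℝ) : ℂ))]
    · rw [Complex.exp_ofReal_mul_I_re]
    · rw [Complex.exp_ofReal_mul_I_im]
  | succ m ih =>
    have hstep := dd_cos_sin ξ v
    constructor
    · rw [Function.iterate_succ_apply, hstep.1, dd_smul v (sin_smooth ξ) _ m, ih.2]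
      funext x
      exact ((aux_step _ _ m).1).symm
    · rw [Function.iterate_succ_apply, hstep.2, dd_smul v (cos_smooth ξ) _ m, ih.1]
      funext x
      exact ((aux_step _ _ m).2).symm

lemma dd_iter_eventuallyEq (v : E) {f g : E → ℝ} {x : E} (h : f =ᶠ[nhds x] g) (m : ℕ) :
    (dd v)^[m] f =ᶠ[nhds x] (dd v)^[m] g := by
  induction m generalizing f g with
  | zero => exact h
  | succ m ih =>
    rw [Function.iterate_succ_apply, Function.iterate_succ_apply]
    apply ih
    filter_upwards [h.fderiv (𝕜 := ℝ)] with y hy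
    show fderiv ℝ f y v = fderiv ℝ g y v
    rw [hy]

lemma integral_dd_iter_eq {Ω : Type*} [MeasurableSpace Ω] (P : Measure Ω)
    [IsProbabilityMeasure P] (X : Ω → EuclideanSpace ℝ (Fin d)) (hX : Measurable X)
    (m : ℕ) (i : Fin d) (Z : Ω → ℝ) (hZ : Integrable Z P)
    (hIBP : ∀ f : EuclideanSpace ℝ (Fin d) → ℝ, ContDiff ℝ (⊤ : ℕ∞) f → HasCompactSupport f →
      ∫ ω, pderivList (List.replicate m i) f (X ω) ∂P = ∫ ω, f (X ω) * Z ω ∂P)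
    (g : E → ℝ) (hg : ContDiff ℝ (⊤ : ℕ∞) g) (hg1 : ∀ x, |g x| ≤ 1)
    (G : ℕ → ℝ) (hgk : ∀ k x, ‖iteratedFDeriv ℝ k g x‖ ≤ G k) :
    ∫ ω, (dd (EuclideanSpace.single i 1))^[m] g (X ω) ∂P = ∫ ω, g (X ω) * Z ω ∂P := by
  classical
  set v : E := EuclideanSpace.single i 1 with hvdef
  have hv : ‖v‖ = 1 := by rw [hvdef]; simp
  let b : ContDiffBump (0 : EuclideanSpace ℝ (Fin d)) := ⟨1, 2, one_pos, one_lt_two⟩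
  set χ : ℕ → E → ℝ := fun n => (b : E → ℝ) ∘ (Mn n) with hχdef
  have hχs : ∀ n, ContDiff ℝ (⊤ : ℕ∞) (χ n) := fun n => chi_smooth b n
  have hχc : ∀ n, HasCompactSupport (χ n) := fun n => chi_compact_support b n
  have hχ1 : ∀ n x, |χ n x| ≤ 1 := fun n x => by
    show |(b : E → ℝ) ((Mn n) x)| ≤ 1
    rw [abs_of_nonneg (b.nonneg' _)]; exact b.le_one
  have hχone : ∀ (n : ℕ) (x : E), ‖x‖ ≤ n + 1 → χ n x = 1 := fun n x hx =>
    chi_one b (le_refl b.rIn) n x hx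
  obtain ⟨K, hK⟩ : ∃ K : ℕ → ℝ, ∀ j, 0 ≤ K j ∧
      ∀ (n : ℕ) (x : E), ‖iteratedFDeriv ℝ j (χ n) x‖ ≤ K j := by
    choose K h1 h2 using fun j => chi_iFD_bound b j
    exact ⟨K, fun j => ⟨h1 j, h2 j⟩⟩
  set fn : ℕ → E → ℝ := fun n x => g x * χ n x with hfndef
  have hfns : ∀ n, ContDiff ℝ (⊤ : ℕ∞) (fn n) := fun n => hg.mul (hχs n)
  have hfnc : ∀ n, HasCompactSupport (fn n) := fun n => (hχc n).mul_left
  have hIBPn : ∀ n, ∫ ω, (dd v)^[m] (fn n) (X ω) ∂P = ∫ ω, fn n (X ω) * Z ω ∂P := by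
    intro n
    rw [← pderivList_replicate]
    exact hIBP (fn n) (hfns n) (hfnc n)
  set B : ℝ := ∑ k ∈ Finset.range (m+1), (m.choose k : ℝ) * G k * K (m - k) with hBdef
  have hGnn : ∀ k, 0 ≤ G k := fun k => le_trans (norm_nonneg _) (hgk k 0)
  have hbound : ∀ (n : ℕ) (x : E), ‖(dd v)^[m] (fn n) x‖ ≤ B := by
    intro n x
    rw [dd_iter_eq_iteratedFDeriv v (hfns n) m x]
    calc ‖iteratedFDeriv ℝ m (fn n) x (fun _ => v)‖
        ≤ ‖iteratedFDeriv ℝ m (fn n) x‖ * ∏ _i : Fin m, ‖v‖ :=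
          ContinuousMultilinearMap.le_opNorm _ _
      _ = ‖iteratedFDeriv ℝ m (fn n) x‖ := by rw [hv]; simp
      _ ≤ ∑ k ∈ Finset.range (m+1), (m.choose k : ℝ) * ‖iteratedFDeriv ℝ k g x‖ *
            ‖iteratedFDeriv ℝ (m - k) (χ n) x‖ :=
          norm_iteratedFDeriv_mul_le hg (hχs n) x (by exact_mod_cast le_top)
      _ ≤ B := by
          apply Finset.sum_le_sum
          intro k _
          apply mul_le_mul (mul_le_mul le_rfl (hgk k x) (norm_nonneg _) (by positivity))
            ((hK (m-k)).2 n x) (norm_nonneg _)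
          exact mul_nonneg (by positivity) (hGnn k)
  have hlim1 : ∀ ω : Ω, Filter.Tendsto (fun n => (dd v)^[m] (fn n) (X ω)) Filter.atTop
      (nhds ((dd v)^[m] g (X ω))) := by
    intro ω
    set x : E := X ω
    have hev : ∀ᶠ n in Filter.atTop, (dd v)^[m] (fn n) x = (dd v)^[m] g x := by
      filter_upwards [Filter.eventually_ge_atTop ⌈‖x‖⌉₊] with n hn
      have hloc : fn n =ᶠ[nhds x] g := by
        have hopen : IsOpen {y : E | ‖y‖ < (n : ℝ) + 1} :=
          isOpen_lt continuous_norm continuous_const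
        have hmem : x ∈ {y : E | ‖y‖ < (n : ℝ) + 1} := by
          have h1 : ‖x‖ ≤ (⌈‖x‖⌉₊ : ℝ) := Nat.le_ceil _
          have h2 : ((⌈‖x‖⌉₊ : ℕ) : ℝ) ≤ (n : ℝ) := by exact_mod_cast hn
          simp only [Set.mem_setOf_eq]; linarith
        filter_upwards [hopen.mem_nhds hmem] with y hy
        show g y * χ n y = g y
        rw [hχone n y (le_of_lt hy), mul_one]
      exact (dd_iter_eventuallyEq v hloc m).eq_of_nhds
    exact Filter.Tendsto.congr' (hev.mono fun n h => h.symm) tendsto_const_nhds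
  have hT1 : Filter.Tendsto (fun n => ∫ ω, (dd v)^[m] (fn n) (X ω) ∂P) Filter.atTop
      (nhds (∫ ω, (dd v)^[m] g (X ω) ∂P)) := by
    apply tendsto_integral_of_dominated_convergence (fun _ => B)
    · exact fun n => (((contDiff_dd_iter v (hfns n) m).continuous.measurable).comp
        hX).aestronglyMeasurable
    · exact integrable_const B
    · exact fun n => Filter.Eventually.of_forall fun ω => hbound n (X ω)
    · exact Filter.Eventually.of_forall hlim1
  have hT2 : Filter.Tendsto (fun n => ∫ ω, fn n (X ω) * Z ω ∂P) Filter.atTop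
      (nhds (∫ ω, g (X ω) * Z ω ∂P)) := by
    apply tendsto_integral_of_dominated_convergence (fun ω => ‖Z ω‖)
    · exact fun n => ((((hfns n).continuous.measurable).comp hX).aestronglyMeasurable).mul
        hZ.aestronglyMeasurable
    · exact hZ.norm
    · intro n
      apply Filter.Eventually.of_forall
      intro ω
      rw [norm_mul]
      apply mul_le_of_le_one_left (norm_nonneg _)
      rw [Real.norm_eq_abs, abs_mul]
      exact mul_le_one₀ (hg1 _) (abs_nonneg _) (hχ1 _ _)
    · apply Filter.Eventually.of_forall
      intro ω
      have hev : ∀ᶠ n in Filter.atTop, fn n (X ω) * Z ω = g (X ω) * Z ω := by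
        filter_upwards [Filter.eventually_ge_atTop ⌈‖X ω‖⌉₊] with n hn
        have h1 : ‖X ω‖ ≤ (n : ℝ) + 1 := by
          have h1 : ‖X ω‖ ≤ (⌈‖X ω‖⌉₊ : ℝ) := Nat.le_ceil _
          have h2 : ((⌈‖X ω‖⌉₊ : ℕ) : ℝ) ≤ (n : ℝ) := by exact_mod_cast hn
          linarith
        show g (X ω) * χ n (X ω) * Z ω = g (X ω) * Z ω
        rw [hχone n _ h1, mul_one]
      exact Filter.Tendsto.congr' (hev.mono fun n h => h.symm) tendsto_const_nhds
  exact tendsto_nhds_unique (hT1.congr hIBPn) hT2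

lemma key_complex {Ω : Type*} [MeasurableSpace Ω] (P : Measure Ω)
    [IsProbabilityMeasure P] (X : Ω → EuclideanSpace ℝ (Fin d)) (hX : Measurable X)
    (m : ℕ) (i : Fin d) (Z : Ω → ℝ) (hZ : Integrable Z P)
    (hIBP : ∀ f : EuclideanSpace ℝ (Fin d) → ℝ, ContDiff ℝ (⊤ : ℕ∞) f → HasCompactSupport f →
      ∫ ω, pderivList (List.replicate m i) f (X ω) ∂P = ∫ ω, f (X ω) * Z ω ∂P)
    (ξ : EuclideanSpace ℝ (Fin d)) :
    (Complex.I * ((inner ℝ ξ (EuclideanSpace.single i 1 : EuclideanSpace ℝ (Fin d)) : ℝ) : ℂ)) ^ m *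
      ∫ ω, Complex.exp (Complex.I * ((inner ℝ ξ (X ω) : ℝ) : ℂ)) ∂P =
    ∫ ω, Complex.exp (Complex.I * ((inner ℝ ξ (X ω) : ℝ) : ℂ)) * ((Z ω : ℝ) : ℂ) ∂P := by
  classical
  set v : EuclideanSpace ℝ (Fin d) := EuclideanSpace.single i 1 with hvdef
  set t : ℝ := (inner ℝ ξ v : ℝ) with htdef
  set F : Ω → ℂ := fun ω => Complex.exp (Complex.I * ((inner ℝ ξ (X ω) : ℝ) : ℂ)) with hFdef
  have hθmeas : Measurable (fun ω => (inner ℝ ξ (X ω) : ℝ)) := by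
    have h : (fun ω => (inner ℝ ξ (X ω) : ℝ)) = (fun y : EuclideanSpace ℝ (Fin d) =>
        (innerSL ℝ ξ) y) ∘ X := by funext ω; simp
    rw [h]
    exact ((innerSL ℝ ξ).continuous.measurable).comp hX
  have hFmeas : AEStronglyMeasurable F P :=
    ((Complex.measurable_exp.comp (measurable_const.mul
      (Complex.measurable_ofReal.comp hθmeas)))).aestronglyMeasurable
  have hFnorm : ∀ ω, ‖F ω‖ = 1 := fun ω => by
    show ‖Complex.exp (Complex.I * ((inner ℝ ξ (X ω) : ℝ) : ℂ))‖ = 1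
    rw [mul_comm]; exact Complex.norm_exp_ofReal_mul_I _
  have hFint : Integrable F P :=
    Integrable.mono' (integrable_const 1) hFmeas
      (Filter.Eventually.of_forall fun ω => le_of_eq (hFnorm ω))
  have hFZint : Integrable (fun ω => F ω * ((Z ω : ℝ) : ℂ)) P :=
    hZ.ofReal.bdd_mul hFmeas (Filter.Eventually.of_forall fun ω => le_of_eq (hFnorm ω))
  -- the two real identities
  have hcosb : ∀ k x, ‖iteratedFDeriv ℝ k (fun x : EuclideanSpace ℝ (Fin d) =>
      Real.cos ((inner ℝ ξ x : ℝ))) x‖ ≤ ‖ξ‖ ^ k := by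
    intro k x
    have h : (fun x : EuclideanSpace ℝ (Fin d) => Real.cos ((inner ℝ ξ x : ℝ))) =
        Real.cos ∘ (innerSL ℝ ξ) := by funext y; simp
    rw [h]
    calc ‖iteratedFDeriv ℝ k (Real.cos ∘ (innerSL ℝ ξ)) x‖ ≤ ‖innerSL ℝ ξ‖ ^ k :=
          norm_iteratedFDeriv_comp_clm_le Real.contDiff_cos (fun k t => (trig_bound k).1 t) _ k x
      _ = ‖ξ‖ ^ k := by rw [innerSL_apply_norm]
  have hsinb : ∀ k x, ‖iteratedFDeriv ℝ k (fun x : EuclideanSpace ℝ (Fin d) =>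
      Real.sin ((inner ℝ ξ x : ℝ))) x‖ ≤ ‖ξ‖ ^ k := by
    intro k x
    have h : (fun x : EuclideanSpace ℝ (Fin d) => Real.sin ((inner ℝ ξ x : ℝ))) =
        Real.sin ∘ (innerSL ℝ ξ) := by funext y; simp
    rw [h]
    calc ‖iteratedFDeriv ℝ k (Real.sin ∘ (innerSL ℝ ξ)) x‖ ≤ ‖innerSL ℝ ξ‖ ^ k :=
          norm_iteratedFDeriv_comp_clm_le Real.contDiff_sin (fun k t => (trig_bound k).2 t) _ k x
      _ = ‖ξ‖ ^ k := by rw [innerSL_apply_norm]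
  have hcos := integral_dd_iter_eq P X hX m i Z hZ hIBP
    (fun x => Real.cos ((inner ℝ ξ x : ℝ))) (cos_smooth ξ)
    (fun x => Real.abs_cos_le_one _) (fun k => ‖ξ‖ ^ k) hcosb
  have hsin := integral_dd_iter_eq P X hX m i Z hZ hIBP
    (fun x => Real.sin ((inner ℝ ξ x : ℝ))) (sin_smooth ξ)
    (fun x => Real.abs_sin_le_one _) (fun k => ‖ξ‖ ^ k) hsinb
  rw [(dd_iter_cos_sin ξ v m).1] at hcos
  rw [(dd_iter_cos_sin ξ v m).2] at hsin
  -- assemble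
  have hmulint : Integrable (fun ω => (Complex.I * (t : ℂ)) ^ m * F ω) P := hFint.const_mul _
  have hcos' : ∫ ω, ((Complex.I * (t : ℂ)) ^ m * F ω).re ∂P
      = ∫ ω, Real.cos ((inner ℝ ξ (X ω) : ℝ)) * Z ω ∂P := hcos
  have hsin' : ∫ ω, ((Complex.I * (t : ℂ)) ^ m * F ω).im ∂P
      = ∫ ω, Real.sin ((inner ℝ ξ (X ω) : ℝ)) * Z ω ∂P := hsin
  have hre : ∫ ω, (F ω * ((Z ω : ℝ) : ℂ)).re ∂P
      = ∫ ω, Real.cos ((inner ℝ ξ (X ω) : ℝ)) * Z ω ∂P := by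
    apply integral_congr_ae
    apply Filter.Eventually.of_forall
    intro ω
    show (Complex.exp (Complex.I * ((inner ℝ ξ (X ω) : ℝ) : ℂ)) * ((Z ω : ℝ) : ℂ)).re =
      Real.cos ((inner ℝ ξ (X ω) : ℝ)) * Z ω
    generalize (inner ℝ ξ (X ω) : ℝ) = θ
    rw [mul_comm Complex.I ((θ : ℝ) : ℂ)]
    simp [Complex.mul_re, Complex.exp_ofReal_mul_I_re, Complex.exp_ofReal_mul_I_im]
  have him : ∫ ω, (F ω * ((Z ω : ℝ) : ℂ)).im ∂P
      = ∫ ω, Real.sin ((inner ℝ ξ (X ω) : ℝ)) * Z ω ∂P := by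
    apply integral_congr_ae
    apply Filter.Eventually.of_forall
    intro ω
    show (Complex.exp (Complex.I * ((inner ℝ ξ (X ω) : ℝ) : ℂ)) * ((Z ω : ℝ) : ℂ)).im =
      Real.sin ((inner ℝ ξ (X ω) : ℝ)) * Z ω
    generalize (inner ℝ ξ (X ω) : ℝ) = θ
    rw [mul_comm Complex.I ((θ : ℝ) : ℂ)]
    simp [Complex.mul_im, Complex.exp_ofReal_mul_I_re, Complex.exp_ofReal_mul_I_im]
  calc (Complex.I * (t : ℂ)) ^ m * ∫ ω, F ω ∂P
      = ∫ ω, (Complex.I * (t : ℂ)) ^ m * F ω ∂P := (integral_const_mul _ _).symm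
    _ = ∫ ω, F ω * ((Z ω : ℝ) : ℂ) ∂P := by
        apply Complex.ext
        · exact ((integral_re hmulint).symm.trans (hcos'.trans hre.symm)).trans
            (integral_re hFZint)
        · exact ((integral_im hmulint).symm.trans (hsin'.trans him.symm)).trans
            (integral_im hFZint)

end Helpers

/-- Iterated integration by parts implies rapid decay of the characteristic function. -/
theorem charFun_rapid_decay_of_iterated_integration_by_parts
    {Ω : Type*} [MeasurableSpace Ω] (P : Measure Ω) [IsProbabilityMeasure P]
    {d : ℕ} (X : Ω → EuclideanSpace ℝ (Fin d)) (hX : Measurable X)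
    (hIBP : ∀ l : List (Fin d), l ≠ [] →
      ∃ Z : Ω → ℝ, Integrable Z P ∧
        ∀ f : EuclideanSpace ℝ (Fin d) → ℝ, ContDiff ℝ (⊤ : ℕ∞) f → HasCompactSupport f →
          ∫ ω, pderivList l f (X ω) ∂P = ∫ ω, f (X ω) * Z ω ∂P) :
    ∀ m : ℕ, ∃ C : ℝ, ∀ ξ : EuclideanSpace ℝ (Fin d),
      ‖∫ ω, Complex.exp (Complex.I * ((inner ℝ ξ (X ω) : ℝ) : ℂ)) ∂P‖ ≤
        C * (1 + ‖ξ‖) ^ (-(m : ℝ)) := by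
  intro m
  have hφ1 : ∀ ξ : EuclideanSpace ℝ (Fin d),
      ‖∫ ω, Complex.exp (Complex.I * ((inner ℝ ξ (X ω) : ℝ) : ℂ)) ∂P‖ ≤ 1 := by
    intro ξ
    have h := norm_integral_le_of_norm_le_const (μ := P)
      (f := fun ω => Complex.exp (Complex.I * ((inner ℝ ξ (X ω) : ℝ) : ℂ))) (C := 1)
      (Filter.Eventually.of_forall fun ω => by
        show ‖Complex.exp (Complex.I * ((inner ℝ ξ (X ω) : ℝ) : ℂ))‖ ≤ 1
        rw [mul_comm]
        exact le_of_eq (Complex.norm_exp_ofReal_mul_I _))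
    simpa using h
  rcases Nat.eq_zero_or_pos m with hm | hm
  · subst hm
    refine ⟨1, fun ξ => ?_⟩
    simpa using hφ1 ξ
  -- m ≥ 1
  have hrepl : ∀ i : Fin d, List.replicate m i ≠ [] := by
    intro i h
    have := congrArg List.length h
    simp at this
    omega
  choose Z hZint hZeq using fun i : Fin d => hIBP (List.replicate m i) (hrepl i)
  set Ci : Fin d → ℝ := fun i => ∫ ω, ‖Z i ω‖ ∂P with hCidef
  have hCinn : ∀ i, 0 ≤ Ci i := fun i => integral_nonneg fun ω => norm_nonneg _
  set S : ℝ := ∑ i, Ci i with hSdef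
  have hSnn : 0 ≤ S := Finset.sum_nonneg fun i _ => hCinn i
  refine ⟨2 ^ m * (1 + Real.sqrt d ^ m * S), fun ξ => ?_⟩
  have hpos : (0:ℝ) < 1 + ‖ξ‖ := by positivity
  rw [Real.rpow_neg hpos.le, Real.rpow_natCast, ← div_eq_mul_inv, le_div_iff₀ (by positivity)]
  by_cases hξ : ‖ξ‖ ≤ 1
  · have hb : (1 + ‖ξ‖) ^ m ≤ 2 ^ m := pow_le_pow_left₀ (by positivity) (by linarith) m
    calc ‖∫ ω, Complex.exp (Complex.I * ((inner ℝ ξ (X ω) : ℝ) : ℂ)) ∂P‖ * (1 + ‖ξ‖) ^ m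
        ≤ 1 * 2 ^ m := mul_le_mul (hφ1 ξ) hb (by positivity) zero_le_one
      _ = 2 ^ m := one_mul _
      _ ≤ 2 ^ m * (1 + Real.sqrt d ^ m * S) := by
          have h0 : (0:ℝ) ≤ Real.sqrt d ^ m * S := by positivity
          nlinarith [mul_nonneg (pow_nonneg (zero_le_two (α := ℝ)) m) h0]
  · push_neg at hξ
    have hd : 0 < d := by
      rcases Nat.eq_zero_or_pos d with h0 | h0
      · exfalso
        subst h0
        have : ‖ξ‖ = 0 := by
          rw [EuclideanSpace.norm_eq]
          simp
        linarith
      · exact h0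
    obtain ⟨i, -, hi⟩ := Finset.exists_max_image (Finset.univ : Finset (Fin d))
      (fun j => |ξ j|) ⟨⟨0, hd⟩, Finset.mem_univ _⟩
    have hnorm_le : ‖ξ‖ ≤ Real.sqrt d * |ξ i| := by
      rw [EuclideanSpace.norm_eq]
      have hsum : ∑ j, ‖ξ j‖ ^ 2 ≤ (d : ℝ) * |ξ i| ^ 2 := by
        calc ∑ j, ‖ξ j‖ ^ 2 ≤ ∑ _j : Fin d, |ξ i| ^ 2 := by
              apply Finset.sum_le_sum
              intro j _
              rw [Real.norm_eq_abs]
              exact pow_le_pow_left₀ (abs_nonneg _) (hi j (Finset.mem_univ j)) 2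
          _ = (d : ℝ) * |ξ i| ^ 2 := by
              rw [Finset.sum_const, Finset.card_univ, Fintype.card_fin, nsmul_eq_mul]
      calc Real.sqrt (∑ j, ‖ξ j‖ ^ 2) ≤ Real.sqrt ((d : ℝ) * |ξ i| ^ 2) :=
            Real.sqrt_le_sqrt hsum
        _ = Real.sqrt d * |ξ i| := by
            rw [Real.sqrt_mul (Nat.cast_nonneg d), Real.sqrt_sq_eq_abs, abs_abs]
    have ht : (inner ℝ ξ (EuclideanSpace.single i (1:ℝ) : EuclideanSpace ℝ (Fin d)) : ℝ) = ξ i := by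
      simp [EuclideanSpace.inner_single_right]
    have hkey := key_complex P X hX m i (Z i) (hZint i) (hZeq i) ξ
    set φ : ℂ := ∫ ω, Complex.exp (Complex.I * ((inner ℝ ξ (X ω) : ℝ) : ℂ)) ∂P with hφdef
    have hnormkey : |ξ i| ^ m * ‖φ‖ ≤ Ci i := by
      have hL : ‖(Complex.I * ((inner ℝ ξ (EuclideanSpace.single i (1:ℝ) :
          EuclideanSpace ℝ (Fin d)) : ℝ) : ℂ)) ^ m * φ‖ = |ξ i| ^ m * ‖φ‖ := by
        rw [norm_mul, norm_pow, norm_mul, Complex.norm_I, one_mul, Complex.norm_real,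
          Real.norm_eq_abs, ht]
      have hR : ‖∫ ω, Complex.exp (Complex.I * ((inner ℝ ξ (X ω) : ℝ) : ℂ)) * ((Z i ω : ℝ) : ℂ) ∂P‖
          ≤ Ci i := by
        calc ‖∫ ω, Complex.exp (Complex.I * ((inner ℝ ξ (X ω) : ℝ) : ℂ)) * ((Z i ω : ℝ) : ℂ) ∂P‖
            ≤ ∫ ω, ‖Complex.exp (Complex.I * ((inner ℝ ξ (X ω) : ℝ) : ℂ)) * ((Z i ω : ℝ) : ℂ)‖ ∂P :=
              norm_integral_le_integral_norm _
          _ = ∫ ω, ‖Z i ω‖ ∂P := by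
              apply integral_congr_ae
              apply Filter.Eventually.of_forall
              intro ω
              show ‖Complex.exp (Complex.I * ((inner ℝ ξ (X ω) : ℝ) : ℂ)) * ((Z i ω : ℝ) : ℂ)‖ =
                ‖Z i ω‖
              rw [norm_mul, mul_comm Complex.I, Complex.norm_exp_ofReal_mul_I, one_mul,
                Complex.norm_real]
      rw [← hL]
      rw [hkey]
      exact hR
    have h4 : Ci i ≤ S := Finset.single_le_sum (fun j _ => hCinn j) (Finset.mem_univ i)
    have h1 : (1 + ‖ξ‖) ^ m ≤ 2 ^ m * ‖ξ‖ ^ m := by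
      rw [← mul_pow]
      exact pow_le_pow_left₀ (by positivity) (by linarith) m
    have h2 : ‖ξ‖ ^ m ≤ Real.sqrt d ^ m * |ξ i| ^ m := by
      rw [← mul_pow]
      exact pow_le_pow_left₀ (norm_nonneg ξ) hnorm_le m
    calc ‖φ‖ * (1 + ‖ξ‖) ^ m ≤ ‖φ‖ * (2 ^ m * ‖ξ‖ ^ m) :=
          mul_le_mul_of_nonneg_left h1 (norm_nonneg _)
      _ = 2 ^ m * (‖ξ‖ ^ m * ‖φ‖) := by ring
      _ ≤ 2 ^ m * ((Real.sqrt d ^ m * |ξ i| ^ m) * ‖φ‖) := by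
          apply mul_le_mul_of_nonneg_left (mul_le_mul_of_nonneg_right h2 (norm_nonneg _))
            (by positivity)
      _ = 2 ^ m * (Real.sqrt d ^ m * (|ξ i| ^ m * ‖φ‖)) := by ring
      _ ≤ 2 ^ m * (Real.sqrt d ^ m * S) := by
          apply mul_le_mul_of_nonneg_left (mul_le_mul_of_nonneg_left (hnormkey.trans h4)
            (by positivity)) (by positivity)
      _ ≤ 2 ^ m * (1 + Real.sqrt d ^ m * S) := by
          apply mul_le_mul_of_nonneg_left _ (by positivity)
          linarith
end

section
/- Tauberian criterion for finiteness of all negative moments of an infinitely divisible nonnegative random variable: Let (E, ℰ, ν) be a measure space with ν(E) = +∞, let ψ : E → (0, ∞) be measurable with ∫_E (1 − e^{−ψ(u)}) ν(du) < ∞, and let t > 0. Let V be a nonnegative random variable whose Laplace transform satisfies E[e^{−λV}] = exp( t ∫_E (e^{−λψ(u)} − 1) ν(du) ) for all λ ≥ 0. Assume there exists α ∈ (0, 1) such that the limit r₁ = lim_{λ → +∞} λ^{−α} ∫_E (e^{−λψ(u)} − 1) ν(du) exists and belongs to (−∞, 0). Then P(V = 0) = 0 and E[V^{−p}] < ∞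 for every p ≥ 1. -/
open MeasureTheory Filter

/-- Tauberian criterion for finiteness of all negative moments of an infinitely
divisible nonnegative random variable whose Laplace transform is
`E[e^{−λV}] = exp(t ∫ (e^{−λψ} − 1) dν)`. -/
theorem negative_moments_of_tauberian_criterion
    {E : Type*} [MeasurableSpace E] (ν : Measure E) (hν : ν Set.univ = ⊤)
    (ψ : E → ℝ) (hψmeas : Measurable ψ) (hψpos : ∀ u, 0 < ψ u)
    (hψint : Integrable (fun u => 1 - Real.exp (-ψ u)) ν)
    (t : ℝ) (ht : 0 < t)
    {Ω : Type*} [MeasurableSpace Ω] (P : Measure Ω) [IsProbabilityMeasure P]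
    (V : Ω → ℝ) (hV : Measurable V) (hVnonneg : ∀ ω, 0 ≤ V ω)
    (hLaplace : ∀ lam : ℝ, 0 ≤ lam →
      ∫ ω, Real.exp (-lam * V ω) ∂P =
        Real.exp (t * ∫ u, (Real.exp (-lam * ψ u) - 1) ∂ν))
    (α r₁ : ℝ) (hα : α ∈ Set.Ioo (0 : ℝ) 1) (hr₁ : r₁ < 0)
    (hlim : Tendsto (fun lam : ℝ => lam ^ (-α) * ∫ u, (Real.exp (-lam * ψ u) - 1) ∂ν)
      atTop (nhds r₁)) :
    P {ω | V ω = 0} = 0 ∧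
      ∀ p : ℝ, 1 ≤ p → ∫⁻ ω, ENNReal.ofReal ((V ω) ^ (-p)) ∂P < ⊤ := by
  obtain ⟨hα0, hα1⟩ := hα
  set I : ℝ → ℝ := fun lam => ∫ u, (Real.exp (-lam * ψ u) - 1) ∂ν with hIdef
  set c : ℝ := t * (-r₁) / 2 with hcdef
  have hc : 0 < c := div_pos (mul_pos ht (by linarith)) two_pos
  -- eventual bound on t * I lam
  have h1 : ∀ᶠ lam in atTop, lam ^ (-α) * I lam ≤ r₁ / 2 :=
    hlim.eventually (eventually_le_nhds (by linarith))
  have hev : ∀ᶠ lam in atTop, t * I lam ≤ -(c * lam ^ α) := by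
    filter_upwards [h1, eventually_ge_atTop (1 : ℝ)] with lam h hl1
    have hlpos : (0 : ℝ) < lam := lt_of_lt_of_le one_pos hl1
    have hpow : (0 : ℝ) < lam ^ α := Real.rpow_pos_of_pos hlpos α
    have hIle : I lam ≤ r₁ / 2 * lam ^ α := by
      have h2 := mul_le_mul_of_nonneg_right h hpow.le
      have h3 : lam ^ (-α) * I lam * lam ^ α = I lam := by
        rw [mul_right_comm, ← Real.rpow_add hlpos, neg_add_cancel, Real.rpow_zero, one_mul]
      rwa [h3] at h2
    have h4 := mul_le_mul_of_nonneg_left hIle ht.le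
    have h5 : t * (r₁ / 2 * lam ^ α) = -(c * lam ^ α) := by rw [hcdef]; ring
    linarith
  obtain ⟨lam0, hlam0⟩ := eventually_atTop.mp hev
  set Λ : ℝ := max lam0 1 with hΛdef
  have hΛ1 : (1 : ℝ) ≤ Λ := le_max_right _ _
  have hΛpos : (0 : ℝ) < Λ := lt_of_lt_of_le one_pos hΛ1
  have hΛ : ∀ lam, Λ ≤ lam → t * I lam ≤ -(c * lam ^ α) := fun lam h =>
    hlam0 lam (le_trans (le_max_left _ _) h)
  -- Laplace transform as lintegral
  have hmeas_exp : ∀ lam : ℝ, Measurable fun ω => Real.exp (-lam * V ω) :=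
    fun lam => (hV.const_mul (-lam)).exp
  have hlapint : ∀ lam : ℝ, 0 ≤ lam → Integrable (fun ω => Real.exp (-lam * V ω)) P := by
    intro lam hlam
    refine (integrable_const (1 : ℝ)).mono' (hmeas_exp lam).aestronglyMeasurable ?_
    refine ae_of_all _ fun ω => ?_
    rw [Real.norm_eq_abs, abs_of_pos (Real.exp_pos _)]
    rw [show (1 : ℝ) = Real.exp 0 by rw [Real.exp_zero]]
    apply Real.exp_le_exp.mpr
    have := mul_nonneg hlam (hVnonneg ω)
    nlinarith
  have hlint : ∀ lam : ℝ, 0 ≤ lam →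
      ∫⁻ ω, ENNReal.ofReal (Real.exp (-lam * V ω)) ∂P = ENNReal.ofReal (Real.exp (t * I lam)) := by
    intro lam hlam
    rw [← ofReal_integral_eq_lintegral_ofReal (hlapint lam hlam)
      (ae_of_all _ fun ω => (Real.exp_pos _).le), hLaplace lam hlam]
  have hkey : ∀ lam : ℝ, Λ ≤ lam →
      ∫⁻ ω, ENNReal.ofReal (Real.exp (-lam * V ω)) ∂P ≤
        ENNReal.ofReal (Real.exp (-(c * lam ^ α))) := by
    intro lam hlam
    rw [hlint lam (le_trans hΛpos.le hlam)]
    exact ENNReal.ofReal_le_ofReal (Real.exp_le_exp.mpr (hΛ lam hlam))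
  -- Part 1 : P(V = 0) = 0
  have h0 : ∀ lam : ℝ, Λ ≤ lam →
      P {ω | V ω = 0} ≤ ENNReal.ofReal (Real.exp (-(c * lam ^ α))) := by
    intro lam hlam
    have hsub : {ω | V ω = 0} ⊆ {ω | 1 ≤ ENNReal.ofReal (Real.exp (-lam * V ω))} := by
      intro ω hω
      simp only [Set.mem_setOf_eq] at hω ⊢
      rw [hω, mul_zero, Real.exp_zero, ENNReal.ofReal_one]
    calc P {ω | V ω = 0} ≤ P {ω | 1 ≤ ENNReal.ofReal (Real.exp (-lam * V ω))} :=
          measure_mono hsub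
      _ = 1 * P {ω | 1 ≤ ENNReal.ofReal (Real.exp (-lam * V ω))} := (one_mul _).symm
      _ ≤ ∫⁻ ω, ENNReal.ofReal (Real.exp (-lam * V ω)) ∂P :=
          mul_meas_ge_le_lintegral₀ ((hmeas_exp lam).ennreal_ofReal.aemeasurable) 1
      _ ≤ _ := hkey lam hlam
  have hP0 : P {ω | V ω = 0} = 0 := by
    refine le_antisymm ?_ zero_le
    have htend : Tendsto (fun lam : ℝ => ENNReal.ofReal (Real.exp (-(c * lam ^ α)))) atTop
        (nhds 0) := by
      rw [show (0 : ENNReal) = ENNReal.ofReal 0 by simp]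
      apply ENNReal.tendsto_ofReal
      apply Real.tendsto_exp_atBot.comp
      apply Filter.tendsto_neg_atBot_iff.mpr
      exact (tendsto_rpow_atTop hα0).const_mul_atTop hc
    exact ge_of_tendsto htend (eventually_atTop.mpr ⟨Λ, h0⟩)
  refine ⟨hP0, ?_⟩
  -- Part 2 : negative moments
  intro p hp
  have hp0 : (0 : ℝ) < p := lt_of_lt_of_le one_pos hp
  set β : ℝ := α / p with hβdef
  have hβ : 0 < β := div_pos hα0 hp0
  set n : ℕ := ⌈2 / β⌉₊ with hndef
  have hn2 : (2 : ℝ) ≤ (n : ℝ) * β := by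
    have h := Nat.le_ceil (2 / β)
    calc (2 : ℝ) = 2 / β * β := by field_simp
      _ ≤ (n : ℝ) * β := mul_le_mul_of_nonneg_right h hβ.le
  have hnpos : (0 : ℝ) < (n : ℝ) := by
    have : 0 < n := Nat.ceil_pos.mpr (by positivity)
    exact_mod_cast this
  set K : ℝ := ((n : ℝ) / c) ^ n with hKdef
  have hK0 : 0 ≤ K := by positivity
  -- polynomial bound on exp decay
  have hexp_poly : ∀ s : ℝ, 1 ≤ s → Real.exp (-(c * s ^ β)) ≤ K * s ^ (-2 : ℝ) := by
    intro s hs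
    have hspos : (0 : ℝ) < s := lt_of_lt_of_le one_pos hs
    have hsβ : (0 : ℝ) < s ^ β := Real.rpow_pos_of_pos hspos β
    set y : ℝ := c * s ^ β with hydef
    have hy : 0 < y := mul_pos hc hsβ
    have hkeyexp : (y / n) ^ n ≤ Real.exp y := by
      have h1 : y / n ≤ Real.exp (y / n) := by
        have := Real.add_one_le_exp (y / n); linarith
      calc (y / n) ^ n ≤ Real.exp (y / n) ^ n :=
            pow_le_pow_left₀ (div_nonneg hy.le hnpos.le) h1 n
        _ = Real.exp ((n : ℝ) * (y / n)) := (Real.exp_nat_mul _ n).symm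
        _ = Real.exp y := by rw [mul_div_cancel₀ _ hnpos.ne']
    have hyn : (0 : ℝ) < (y / n) ^ n := pow_pos (div_pos hy hnpos) n
    have h2 : Real.exp (-y) ≤ ((y / n) ^ n)⁻¹ := by
      rw [Real.exp_neg]
      exact inv_anti₀ hyn hkeyexp
    have h3 : ((y / n) ^ n)⁻¹ = K * (s ^ (β * (n : ℝ)))⁻¹ := by
      rw [hydef, hKdef, div_pow, div_pow, mul_pow,
        ← Real.rpow_natCast (s ^ β) n, ← Real.rpow_mul hspos.le]
      have hsn : (0:ℝ) < s ^ (β * (n : ℝ)) := Real.rpow_pos_of_pos hspos _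
      field_simp
    have h4 : (s ^ (β * (n : ℝ)))⁻¹ = s ^ (-(β * (n : ℝ))) := by
      rw [Real.rpow_neg hspos.le]
    have h5 : s ^ (-(β * (n : ℝ))) ≤ s ^ (-2 : ℝ) := by
      apply Real.rpow_le_rpow_of_exponent_le hs
      nlinarith
    calc Real.exp (-y) ≤ ((y / n) ^ n)⁻¹ := h2
      _ = K * s ^ (-(β * (n : ℝ))) := by rw [h3, h4]
      _ ≤ K * s ^ (-2 : ℝ) := mul_le_mul_of_nonneg_left h5 hK0
  -- tail bound
  set s₁ : ℝ := Λ ^ p with hs₁def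
  have hs₁1 : (1 : ℝ) ≤ s₁ := Real.one_le_rpow hΛ1 hp0.le
  have hs₁pos : (0 : ℝ) < s₁ := lt_of_lt_of_le one_pos hs₁1
  have tail : ∀ s : ℝ, s₁ ≤ s →
      P {ω | s < V ω ^ (-p)} ≤
        ENNReal.ofReal (Real.exp 1) * ENNReal.ofReal (Real.exp (-(c * s ^ β))) := by
    intro s hs
    have hs1 : (1 : ℝ) ≤ s := hs₁1.trans hs
    have hspos : (0 : ℝ) < s := lt_of_lt_of_le one_pos hs1
    set lam : ℝ := s ^ (1 / p) with hlamdef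
    have hlampos : 0 < lam := Real.rpow_pos_of_pos hspos _
    have hlamΛ : Λ ≤ lam := by
      have h1 : (Λ ^ p) ^ (1 / p) ≤ s ^ (1 / p) :=
        Real.rpow_le_rpow (Real.rpow_nonneg hΛpos.le p) hs (by positivity)
      rwa [← Real.rpow_mul hΛpos.le, mul_one_div_cancel hp0.ne', Real.rpow_one] at h1
    have hlamα : lam ^ α = s ^ β := by
      rw [hlamdef, ← Real.rpow_mul hspos.le, hβdef]
      congr 1
      ring
    have hsub : {ω | s < V ω ^ (-p)} ⊆
        {ω | ENNReal.ofReal (Real.exp (-1)) ≤ ENNReal.ofReal (Real.exp (-lam * V ω))} := by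
      intro ω hω
      simp only [Set.mem_setOf_eq] at hω ⊢
      apply ENNReal.ofReal_le_ofReal
      apply Real.exp_le_exp.mpr
      have hVpos : 0 < V ω := by
        rcases lt_or_eq_of_le (hVnonneg ω) with h | h
        · exact h
        · exfalso
          rw [← h, Real.zero_rpow (neg_ne_zero.mpr hp0.ne')] at hω
          linarith
      have hVlt : V ω < s ^ (-(1 / p)) := by
        have h1 : (V ω ^ (-p)) ^ (-(1 / p)) < s ^ (-(1 / p)) :=
          Real.rpow_lt_rpow_of_neg hspos hω (neg_lt_zero.mpr (by positivity))
        rwa [← Real.rpow_mul (hVnonneg ω),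
          show (-p) * (-(1 / p)) = 1 by field_simp, Real.rpow_one] at h1
      have hprod : lam * s ^ (-(1 / p)) = 1 := by
        rw [hlamdef, ← Real.rpow_add hspos, add_neg_cancel, Real.rpow_zero]
      have := mul_lt_mul_of_pos_left hVlt hlampos
      nlinarith
    calc P {ω | s < V ω ^ (-p)}
        ≤ P {ω | ENNReal.ofReal (Real.exp (-1)) ≤ ENNReal.ofReal (Real.exp (-lam * V ω))} :=
          measure_mono hsub
      _ = ENNReal.ofReal (Real.exp 1) * (ENNReal.ofReal (Real.exp (-1)) *
            P {ω | ENNReal.ofReal (Real.exp (-1)) ≤ ENNReal.ofReal (Real.exp (-lam * V ω))}) := by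
          rw [← mul_assoc, ← ENNReal.ofReal_mul (Real.exp_pos 1).le, ← Real.exp_add,
            add_neg_cancel, Real.exp_zero, ENNReal.ofReal_one, one_mul]
      _ ≤ ENNReal.ofReal (Real.exp 1) * ∫⁻ ω, ENNReal.ofReal (Real.exp (-lam * V ω)) ∂P :=
          mul_le_mul_right
            (mul_meas_ge_le_lintegral₀ ((hmeas_exp lam).ennreal_ofReal.aemeasurable) _) _
      _ ≤ ENNReal.ofReal (Real.exp 1) * ENNReal.ofReal (Real.exp (-(c * s ^ β))) := by
          apply mul_le_mul_right
          rw [← hlamα]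
          exact hkey lam hlamΛ
  -- layer cake and conclusion
  have hmg : Measurable fun ω => V ω ^ (-p) := hV.pow measurable_const
  rw [lintegral_eq_lintegral_meas_lt P
    (ae_of_all _ fun ω => Real.rpow_nonneg (hVnonneg ω) _) hmg.aemeasurable]
  rw [show Set.Ioi (0 : ℝ) = Set.Ioc 0 s₁ ∪ Set.Ioi s₁ from
    (Set.Ioc_union_Ioi_eq_Ioi hs₁pos.le).symm]
  apply lt_of_le_of_lt (lintegral_union_le _ _ _)
  apply ENNReal.add_lt_top.mpr
  constructor
  · calc ∫⁻ s in Set.Ioc 0 s₁, P {ω | s < V ω ^ (-p)} ∂volume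
        ≤ ∫⁻ _ in Set.Ioc 0 s₁, 1 ∂volume := lintegral_mono fun s => prob_le_one
      _ = volume (Set.Ioc 0 s₁) := setLIntegral_one _
      _ = ENNReal.ofReal s₁ := by rw [Real.volume_Ioc, sub_zero]
      _ < ⊤ := ENNReal.ofReal_lt_top
  · have hb : ∀ s ∈ Set.Ioi s₁, P {ω | s < V ω ^ (-p)} ≤
        ENNReal.ofReal (Real.exp 1 * (K * s ^ (-2 : ℝ))) := by
      intro s hs
      have hss : s₁ ≤ s := le_of_lt hs
      refine (tail s hss).trans ?_
      rw [ENNReal.ofReal_mul (Real.exp_pos 1).le]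
      exact mul_le_mul_right (ENNReal.ofReal_le_ofReal (hexp_poly s (hs₁1.trans hss))) _
    have hmebd : Measurable fun s : ℝ => ENNReal.ofReal (Real.exp 1 * (K * s ^ (-2 : ℝ))) := by
      apply Measurable.ennreal_ofReal
      exact (((measurable_id.pow measurable_const).const_mul K).const_mul (Real.exp 1))
    have hint : IntegrableOn (fun s : ℝ => Real.exp 1 * (K * s ^ (-2 : ℝ))) (Set.Ioi s₁) :=
      (((integrableOn_Ioi_rpow_of_lt (by norm_num) hs₁pos).const_mul K).const_mul (Real.exp 1))
    calc ∫⁻ s in Set.Ioi s₁, P {ω | s < V ω ^ (-p)} ∂volume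
        ≤ ∫⁻ s in Set.Ioi s₁, ENNReal.ofReal (Real.exp 1 * (K * s ^ (-2 : ℝ))) ∂volume :=
          setLIntegral_mono hmebd hb
      _ ≤ ∫⁻ s in Set.Ioi s₁, (‖Real.exp 1 * (K * s ^ (-2 : ℝ))‖₊ : ENNReal) ∂volume :=
          lintegral_ofReal_le_lintegral_enorm _
      _ < ⊤ := hint.hasFiniteIntegral
end

section
/- Laplace transform decay implies finiteness of all negative moments: Let V be a nonnegative random variable on a probability space (Ω, 𝒜, P), and suppose there exist constants α > 0, c > 0 and λ₀ ≥ 0 such that E[e^{−λV}] ≤ exp(−c λ^α) for all λ ≥ λ₀. Then P(V = 0) = 0 and E[V^{−p}] < ∞ for every p ≥ 1. -/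
open MeasureTheory Filter Set Real

lemma aux_exp_rpow_lintegral_lt_top {β c T : ℝ} (hβ : 0 < β) (hc : 0 < c) (hT : 0 < T) :
    ∫⁻ t in Set.Ioi T, ENNReal.ofReal (Real.exp (1 - c * t ^ β)) < ⊤ := by
  -- eventually exp(-c t^β) ≤ t^(-2)
  have h0 : Tendsto (fun t : ℝ => t ^ (2:ℝ) * Real.exp (-c * t ^ β)) atTop (nhds 0) := by
    have h1 := (tendsto_rpow_mul_exp_neg_mul_atTop_nhds_zero (2/β) c hc).comp
      (tendsto_rpow_atTop hβ)
    apply h1.congr'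
    filter_upwards [eventually_gt_atTop (0:ℝ)] with t ht
    simp only [Function.comp]
    congr 1
    rw [← Real.rpow_mul ht.le]
    congr 1
    field_simp
  obtain ⟨T₁, hT₁⟩ : ∃ T₁ : ℝ, ∀ t ≥ T₁, t ^ (2:ℝ) * Real.exp (-c * t ^ β) ≤ 1 :=
    eventually_atTop.mp (h0.eventually (eventually_le_nhds (by norm_num : (0:ℝ) < 1)))
  set M := max T T₁ with hM
  have hM0 : 0 < M := lt_of_lt_of_le hT (le_max_left _ _)
  rw [← Set.Ioc_union_Ioi_eq_Ioi (le_max_left T T₁), lintegral_union measurableSet_Ioi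
    Set.Ioc_disjoint_Ioi_same]
  have part1 : ∫⁻ t in Set.Ioc T M, ENNReal.ofReal (Real.exp (1 - c * t ^ β)) < ⊤ := by
    refine lt_of_le_of_lt (setLIntegral_mono' measurableSet_Ioc
      (g := fun _ => ENNReal.ofReal (Real.exp 1)) fun t ht => ?_) ?_
    · refine ENNReal.ofReal_le_ofReal (Real.exp_le_exp.mpr ?_)
      have := mul_pos hc (Real.rpow_pos_of_pos (hT.trans ht.1) β)
      linarith
    · rw [setLIntegral_const]
      exact ENNReal.mul_lt_top ENNReal.ofReal_lt_top measure_Ioc_lt_top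
  have part2 : ∫⁻ t in Set.Ioi M, ENNReal.ofReal (Real.exp (1 - c * t ^ β)) < ⊤ := by
    have hint : IntegrableOn (fun t : ℝ => Real.exp 1 * t ^ (-2:ℝ)) (Set.Ioi M) :=
      (integrableOn_Ioi_rpow_of_lt (by norm_num) hM0).const_mul _
    refine lt_of_le_of_lt (setLIntegral_mono' measurableSet_Ioi fun t ht => ?_)
      hint.lintegral_lt_top
    refine ENNReal.ofReal_le_ofReal ?_
    have ht0 : 0 < t := hM0.trans ht
    have hb := hT₁ t (le_trans (le_max_right T T₁) ht.le)
    have h2 : Real.exp (-c * t ^ β) ≤ t ^ (-2:ℝ) := by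
      rw [Real.rpow_neg ht0.le, ← one_div, le_div_iff₀ (Real.rpow_pos_of_pos ht0 2)]
      linarith [mul_comm (Real.exp (-c * t ^ β)) (t ^ (2:ℝ))]
    calc Real.exp (1 - c * t ^ β) = Real.exp 1 * Real.exp (-c * t ^ β) := by
          rw [← Real.exp_add]; ring_nf
      _ ≤ Real.exp 1 * t ^ (-2:ℝ) := by
          exact mul_le_mul_of_nonneg_left h2 (Real.exp_pos 1).le
  exact ENNReal.add_lt_top.mpr ⟨part1, part2⟩

/-- Laplace transform decay `E[e^{−λV}] ≤ exp(−c λ^α)` for large `λ` implies that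
`V > 0` a.s. and all negative moments of `V` are finite. -/
theorem negative_moments_of_laplace_decay
    {Ω : Type*} [MeasurableSpace Ω] (P : Measure Ω) [IsProbabilityMeasure P]
    (V : Ω → ℝ) (hV : Measurable V) (hVnonneg : ∀ ω, 0 ≤ V ω)
    (α c lam₀ : ℝ) (hα : 0 < α) (hc : 0 < c) (hlam₀ : 0 ≤ lam₀)
    (hLaplace : ∀ lam : ℝ, lam₀ ≤ lam →
      ∫ ω, Real.exp (-lam * V ω) ∂P ≤ Real.exp (-c * lam ^ α)) :
    P {ω | V ω = 0} = 0 ∧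
      ∀ p : ℝ, 1 ≤ p → ∫⁻ ω, ENNReal.ofReal ((V ω) ^ (-p)) ∂P < ⊤ := by
  have key : ∀ lam : ℝ, lam₀ ≤ lam → ∀ s : ℝ, P {ω | V ω ≤ s} ≤
      ENNReal.ofReal (Real.exp (lam * s - c * lam ^ α)) := by
    intro lam hlam s
    have hlam0 : 0 ≤ lam := hlam₀.trans hlam
    have hmeas : Measurable fun ω => Real.exp (-lam * V ω) := (hV.const_mul (-lam)).exp
    have hint : Integrable (fun ω => Real.exp (-lam * V ω)) P := by
      refine (integrable_const (1:ℝ)).mono' hmeas.aestronglyMeasurable ?_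
      filter_upwards with ω
      rw [Real.norm_eq_abs, abs_of_pos (Real.exp_pos _)]
      refine Real.exp_le_one_iff.mpr ?_
      nlinarith [hVnonneg ω]
    calc P {ω | V ω ≤ s} = ∫⁻ _ in {ω | V ω ≤ s}, 1 ∂P := (setLIntegral_one _).symm
      _ ≤ ∫⁻ ω in {ω | V ω ≤ s}, ENNReal.ofReal (Real.exp (lam * s + -lam * V ω)) ∂P := by
          refine setLIntegral_mono' (hV measurableSet_Iic) fun ω hω => ?_
          rw [← ENNReal.ofReal_one]
          refine ENNReal.ofReal_le_ofReal (Real.one_le_exp ?_)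
          have : V ω ≤ s := hω
          nlinarith
      _ ≤ ∫⁻ ω, ENNReal.ofReal (Real.exp (lam * s + -lam * V ω)) ∂P :=
          setLIntegral_le_lintegral _ _
      _ = ENNReal.ofReal (∫ ω, Real.exp (lam * s) * Real.exp (-lam * V ω) ∂P) := by
          rw [ofReal_integral_eq_lintegral_ofReal (hint.const_mul _)
            (ae_of_all _ fun ω => by positivity)]
          congr 1 with ω
          rw [← Real.exp_add]
      _ ≤ ENNReal.ofReal (Real.exp (lam * s) * Real.exp (-c * lam ^ α)) := by
          refine ENNReal.ofReal_le_ofReal ?_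
          rw [integral_const_mul]
          exact mul_le_mul_of_nonneg_left (hLaplace lam hlam) (Real.exp_pos _).le
      _ = ENNReal.ofReal (Real.exp (lam * s - c * lam ^ α)) := by
          rw [← Real.exp_add]; ring_nf
  constructor
  · have hsub : {ω | V ω = 0} ⊆ {ω | V ω ≤ 0} := fun ω h => le_of_eq h
    have hb : ∀ lam ≥ lam₀, P {ω | V ω = 0} ≤
        ENNReal.ofReal (Real.exp (lam * 0 - c * lam ^ α)) :=
      fun lam hlam => (measure_mono hsub).trans (key lam hlam 0)
    have htend : Tendsto (fun lam : ℝ => ENNReal.ofReal (Real.exp (lam * 0 - c * lam ^ α)))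
        atTop (nhds 0) := by
      rw [← ENNReal.ofReal_zero]
      refine ENNReal.tendsto_ofReal ?_
      have h3 : Tendsto (fun lam : ℝ => c * lam ^ α) atTop atTop :=
        (tendsto_rpow_atTop hα).const_mul_atTop hc
      have h2 : Tendsto (fun lam : ℝ => -c * lam ^ α) atTop atBot := by
        have h4 := tendsto_neg_atTop_atBot.comp h3
        refine h4.congr fun lam => ?_
        simp [Function.comp, neg_mul]
      have h5 := Real.tendsto_exp_atBot.comp h2
      refine h5.congr fun lam => ?_
      simp [Function.comp, mul_zero, zero_sub]
    exact le_antisymm (ge_of_tendsto htend (eventually_atTop.mpr ⟨lam₀, hb⟩)) zero_le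
  · intro p hp
    have hp0 : 0 < p := lt_of_lt_of_le one_pos hp
    have hfnn : ∀ ω, 0 ≤ (V ω) ^ (-p) := fun ω => Real.rpow_nonneg (hVnonneg ω) _
    have hfm : Measurable fun ω => (V ω) ^ (-p) := hV.pow measurable_const
    rw [lintegral_eq_lintegral_meas_lt P (ae_of_all _ hfnn) hfm.aemeasurable]
    set T := max 1 (lam₀ ^ p) with hTdef
    have hT1 : (1:ℝ) ≤ T := le_max_left _ _
    have hT0 : (0:ℝ) < T := lt_of_lt_of_le one_pos hT1
    rw [← Set.Ioc_union_Ioi_eq_Ioi hT0.le, lintegral_union measurableSet_Ioi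
      Set.Ioc_disjoint_Ioi_same]
    refine ENNReal.add_lt_top.mpr ⟨?_, ?_⟩
    · refine lt_of_le_of_lt (setLIntegral_mono' measurableSet_Ioc
        (g := fun _ => 1) fun t _ => prob_le_one) ?_
      rw [setLIntegral_one]
      exact measure_Ioc_lt_top
    · have hbound : ∀ t ∈ Set.Ioi T, P {a | t < (V a) ^ (-p)} ≤
          ENNReal.ofReal (Real.exp (1 - c * t ^ (p⁻¹ * α))) := by
        intro t ht
        have ht1 : (1:ℝ) ≤ t := hT1.trans (le_of_lt ht)
        have ht0 : (0:ℝ) < t := lt_of_lt_of_le one_pos ht1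
        have hlam : lam₀ ≤ t ^ (p⁻¹) := by
          have h2 : lam₀ ^ p ≤ t := le_trans (le_max_right 1 _) ht.le
          have h3 := Real.rpow_le_rpow (Real.rpow_nonneg hlam₀ p) h2 (inv_nonneg.mpr hp0.le)
          rwa [← Real.rpow_mul hlam₀, mul_inv_cancel₀ hp0.ne', Real.rpow_one] at h3
        have hsub : {a | t < (V a) ^ (-p)} ⊆ {a | V a ≤ t ^ (-p⁻¹)} := by
          intro a ha
          simp only [Set.mem_setOf_eq] at ha ⊢
          have hVa : 0 < V a := by
            rcases (hVnonneg a).lt_or_eq with h | h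
            · exact h
            · exfalso
              rw [← h, Real.zero_rpow (neg_ne_zero.mpr hp0.ne')] at ha
              linarith
          have h3 := Real.rpow_le_rpow ht0.le ha.le (inv_nonneg.mpr hp0.le)
          rw [← Real.rpow_mul hVa.le, neg_mul, mul_inv_cancel₀ hp0.ne',
            Real.rpow_neg_one] at h3
          rw [Real.rpow_neg ht0.le]
          calc V a = ((V a)⁻¹)⁻¹ := (inv_inv _).symm
            _ ≤ (t ^ p⁻¹)⁻¹ := inv_anti₀ (Real.rpow_pos_of_pos ht0 _) h3
        refine le_trans (measure_mono hsub) (le_trans (key _ hlam _) (le_of_eq ?_))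
        have e1 : t ^ (p⁻¹) * t ^ (-p⁻¹) = 1 := by
          rw [← Real.rpow_add ht0]; simp
        have e2 : (t ^ (p⁻¹)) ^ α = t ^ (p⁻¹ * α) := (Real.rpow_mul ht0.le _ _).symm
        rw [e1, e2]
      refine lt_of_le_of_lt (setLIntegral_mono' measurableSet_Ioi hbound) ?_
      exact aux_exp_rpow_lintegral_lt_top (by positivity) hc hT0
end

section
/- Asymptotics of the truncated Laplace-type integral for the Lévy measure y^{−1−ε} dy: For every ε ∈ (0, 1), the limit lim_{λ → +∞} λ^{−ε/2} ∫₀^1 (e^{−λ y²} − 1) y^{−1−ε} dy exists, equals ∫₀^{∞} (e^{−t²} − 1) t^{−1−ε} dt, and this value is finite and strictly negative. -/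
open MeasureTheory Filter

private lemma tli_cont (ε : ℝ) :
    ContinuousOn (fun t : ℝ => (Real.exp (-t ^ 2) - 1) * t ^ (-1 - ε)) (Set.Ioi 0) := by
  apply ContinuousOn.mul
  · exact ((Real.continuous_exp.comp ((continuous_pow 2).neg)).sub continuous_const).continuousOn
  · intro t ht
    exact (Real.continuousAt_rpow_const t _ (Or.inl (ne_of_gt ht))).continuousWithinAt

private lemma tli_integrable (ε : ℝ) (hε : ε ∈ Set.Ioo (0 : ℝ) 1) :
    IntegrableOn (fun t : ℝ => (Real.exp (-t ^ 2) - 1) * t ^ (-1 - ε)) (Set.Ioi 0) := by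
  obtain ⟨hε0, hε1⟩ := hε
  set g : ℝ → ℝ := fun t => (Real.exp (-t ^ 2) - 1) * t ^ (-1 - ε) with hg
  have hcont := tli_cont ε
  have hmeas : AEStronglyMeasurable g (volume.restrict (Set.Ioi (0:ℝ))) :=
    hcont.aestronglyMeasurable measurableSet_Ioi
  have h1 : IntegrableOn g (Set.Ioo 0 1) := by
    have hb : IntegrableOn (fun t : ℝ => t ^ (1 - ε)) (Set.Ioo 0 1) :=
      (intervalIntegral.integrableOn_Ioo_rpow_iff one_pos).2 (by linarith)
    refine hb.mono' (hmeas.mono_measure (Measure.restrict_mono Set.Ioo_subset_Ioi_self le_rfl)) ?_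
    rw [ae_restrict_iff' measurableSet_Ioo]
    filter_upwards with t ht
    have ht0 : (0:ℝ) < t := ht.1
    have hexp : Real.exp (-t ^ 2) ≤ 1 := Real.exp_le_one_iff.2 (neg_nonpos.2 (sq_nonneg t))
    have hexp2 : 1 - Real.exp (-t ^ 2) ≤ t ^ 2 := by
      have := Real.add_one_le_exp (-t ^ 2)
      linarith
    have hrp : (0:ℝ) ≤ t ^ (-1 - ε) := (Real.rpow_pos_of_pos ht0 _).le
    have : ‖g t‖ = (1 - Real.exp (-t ^ 2)) * t ^ (-1 - ε) := by
      rw [hg, norm_mul, Real.norm_eq_abs, Real.norm_eq_abs, abs_of_nonpos (by linarith),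
        abs_of_nonneg hrp]
      ring
    rw [this]
    calc (1 - Real.exp (-t ^ 2)) * t ^ (-1 - ε) ≤ t ^ 2 * t ^ (-1 - ε) := by
          apply mul_le_mul_of_nonneg_right hexp2 hrp
      _ = t ^ (1 - ε) := by
          rw [← Real.rpow_natCast t 2, ← Real.rpow_add ht0]
          congr 1
          push_cast
          ring
  have h2 : IntegrableOn g (Set.Ioi 1) := by
    have hb : IntegrableOn (fun t : ℝ => t ^ (-1 - ε)) (Set.Ioi 1) :=
      integrableOn_Ioi_rpow_of_lt (by linarith) one_pos
    refine hb.mono' (hmeas.mono_measure (Measure.restrict_mono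
      (fun t (ht : (1:ℝ) < t) => lt_trans one_pos ht) le_rfl)) ?_
    rw [ae_restrict_iff' measurableSet_Ioi]
    filter_upwards with t ht
    have ht0 : (0:ℝ) < t := lt_trans one_pos ht
    have hexp : Real.exp (-t ^ 2) ≤ 1 := Real.exp_le_one_iff.2 (neg_nonpos.2 (sq_nonneg t))
    have hexp0 : 0 < Real.exp (-t ^ 2) := Real.exp_pos _
    have hrp : (0:ℝ) ≤ t ^ (-1 - ε) := (Real.rpow_pos_of_pos ht0 _).le
    have : ‖g t‖ = (1 - Real.exp (-t ^ 2)) * t ^ (-1 - ε) := by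
      rw [hg, norm_mul, Real.norm_eq_abs, Real.norm_eq_abs, abs_of_nonpos (by linarith),
        abs_of_nonneg hrp]
      ring
    rw [this]
    calc (1 - Real.exp (-t ^ 2)) * t ^ (-1 - ε) ≤ 1 * t ^ (-1 - ε) := by
          apply mul_le_mul_of_nonneg_right (by linarith) hrp
      _ = t ^ (-1 - ε) := one_mul _
  have h1' : IntegrableOn g (Set.Ioc 0 1) := by
    rw [IntegrableOn, Measure.restrict_congr_set MeasureTheory.Ioo_ae_eq_Ioc.symm]
    exact h1
  have : Set.Ioi (0:ℝ) = Set.Ioc 0 1 ∪ Set.Ioi 1 := (Set.Ioc_union_Ioi_eq_Ioi zero_le_one).symm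
  rw [this]
  exact h1'.union h2

/-- Asymptotics of the truncated Laplace-type integral for the Lévy measure
`y^{−1−ε} dy`: for `ε ∈ (0,1)`,
`λ^{−ε/2} ∫₀¹ (e^{−λy²} − 1) y^{−1−ε} dy → ∫₀^∞ (e^{−t²} − 1) t^{−1−ε} dt`
as `λ → ∞`, and this limit is finite (the integrand is integrable on `(0,∞)`)
and strictly negative. -/
theorem truncated_laplace_integral_asymptotics (ε : ℝ) (hε : ε ∈ Set.Ioo (0 : ℝ) 1) :
    IntegrableOn (fun t : ℝ => (Real.exp (-t ^ 2) - 1) * t ^ (-1 - ε)) (Set.Ioi 0) ∧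
    (∫ t in Set.Ioi (0 : ℝ), (Real.exp (-t ^ 2) - 1) * t ^ (-1 - ε)) < 0 ∧
    Tendsto (fun lam : ℝ => lam ^ (-(ε / 2)) *
        ∫ y in Set.Ioo (0 : ℝ) 1, (Real.exp (-(lam * y ^ 2)) - 1) * y ^ (-1 - ε))
      atTop
      (nhds (∫ t in Set.Ioi (0 : ℝ), (Real.exp (-t ^ 2) - 1) * t ^ (-1 - ε))) := by
  obtain ⟨hε0, hε1⟩ := hε
  set g : ℝ → ℝ := fun t => (Real.exp (-t ^ 2) - 1) * t ^ (-1 - ε) with hg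
  have hInt : IntegrableOn g (Set.Ioi 0) := tli_integrable ε ⟨hε0, hε1⟩
  refine ⟨hInt, ?_, ?_⟩
  · -- strict negativity
    have hneg : 0 < ∫ t in Set.Ioi (0:ℝ), -g t := by
      refine (setIntegral_pos_iff_support_of_nonneg_ae ?_ ?_).2 ?_
      · filter_upwards [ae_restrict_mem measurableSet_Ioi] with t ht
        have h1 : Real.exp (-t ^ 2) ≤ 1 := Real.exp_le_one_iff.2 (neg_nonpos.2 (sq_nonneg t))
        have h2 : (0:ℝ) ≤ t ^ (-1 - ε) := (Real.rpow_pos_of_pos ht _).le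
        simp only [hg, Pi.zero_apply, Left.nonneg_neg_iff]
        exact mul_nonpos_of_nonpos_of_nonneg (by linarith) h2
      · exact hInt.neg
      · have hsub : Set.Ioi (0:ℝ) ⊆ Function.support (fun t => -g t) ∩ Set.Ioi 0 := by
          intro t ht
          have ht' : (0:ℝ) < t := ht
          have h1 : Real.exp (-t ^ 2) < 1 := Real.exp_lt_one_iff.2 (neg_lt_zero.2 (pow_pos ht' 2))
          have h2 : (0:ℝ) < t ^ (-1 - ε) := Real.rpow_pos_of_pos ht' _
          refine ⟨?_, ht⟩
          simp only [Function.mem_support, hg, neg_ne_zero]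
          exact ne_of_lt (mul_neg_of_neg_of_pos (by linarith) h2)
        refine lt_of_lt_of_le ?_ (measure_mono hsub)
        simp [Real.volume_Ioi]
    rw [integral_neg] at hneg
    linarith
  · -- the limit
    have hkey : ∀ᶠ lam : ℝ in atTop,
        lam ^ (-(ε / 2)) * (∫ y in Set.Ioo (0:ℝ) 1, (Real.exp (-(lam * y ^ 2)) - 1) * y ^ (-1 - ε))
          = ∫ t in (0:ℝ)..(Real.sqrt lam), g t := by
      filter_upwards [eventually_gt_atTop 0] with lam hlam
      set c := Real.sqrt lam with hc
      have hc0 : 0 < c := Real.sqrt_pos.2 hlam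
      -- rewrite integrand
      have hcongr : ∫ y in Set.Ioo (0:ℝ) 1, (Real.exp (-(lam * y ^ 2)) - 1) * y ^ (-1 - ε)
          = ∫ y in Set.Ioo (0:ℝ) 1, c ^ (1 + ε) * g (c * y) := by
        refine setIntegral_congr_fun measurableSet_Ioo fun y hy => ?_
        have hy0 : 0 < y := hy.1
        have hsq : (c * y) ^ 2 = lam * y ^ 2 := by
          rw [mul_pow, hc, Real.sq_sqrt hlam.le]
        have hrp : (c * y) ^ (-1 - ε) = c ^ (-1 - ε) * y ^ (-1 - ε) :=
          Real.mul_rpow hc0.le hy0.le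
        simp only [hg, hsq, hrp]
        have : c ^ (1 + ε) * c ^ (-1 - ε) = 1 := by
          rw [← Real.rpow_add hc0]
          norm_num
        calc (Real.exp (-(lam * y ^ 2)) - 1) * y ^ (-1 - ε)
            = (c ^ (1 + ε) * c ^ (-1 - ε)) * ((Real.exp (-(lam * y ^ 2)) - 1) * y ^ (-1 - ε)) := by
              rw [this]; ring
          _ = c ^ (1 + ε) * ((Real.exp (-(lam * y ^ 2)) - 1) * (c ^ (-1 - ε) * y ^ (-1 - ε))) := by
              ring
      rw [hcongr]
      have hIoo : ∫ y in Set.Ioo (0:ℝ) 1, c ^ (1 + ε) * g (c * y)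
          = ∫ y in (0:ℝ)..1, c ^ (1 + ε) * g (c * y) := by
        rw [intervalIntegral.integral_of_le zero_le_one, integral_Ioc_eq_integral_Ioo]
      rw [hIoo, intervalIntegral.integral_const_mul,
        intervalIntegral.integral_comp_mul_left g (ne_of_gt hc0), mul_zero, mul_one,
        smul_eq_mul]
      have hpow : lam ^ (-(ε / 2)) * (c ^ (1 + ε) * c⁻¹) = 1 := by
        have hcne : c ≠ 0 := ne_of_gt hc0
        have h1 : c ^ (1 + ε) * c⁻¹ = c ^ ε := by
          rw [← Real.rpow_neg_one c, ← Real.rpow_add hc0]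
          norm_num
        rw [h1, hc, Real.sqrt_eq_rpow, ← Real.rpow_mul hlam.le, ← Real.rpow_add hlam,
          show -(ε / 2) + 1 / 2 * ε = 0 by ring, Real.rpow_zero]
      calc lam ^ (-(ε / 2)) * (c ^ (1 + ε) * (c⁻¹ * ∫ t in (0:ℝ)..c, g t))
          = (lam ^ (-(ε / 2)) * (c ^ (1 + ε) * c⁻¹)) * ∫ t in (0:ℝ)..c, g t := by ring
        _ = ∫ t in (0:ℝ)..c, g t := by rw [hpow, one_mul]
    have hsqrt : Tendsto Real.sqrt atTop atTop := by
      refine tendsto_atTop_atTop.2 fun b => ⟨(max b 0) ^ 2, fun a ha => ?_⟩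
      have : max b 0 ≤ Real.sqrt a := by
        rw [show max b 0 = Real.sqrt ((max b 0) ^ 2) from
          (Real.sqrt_sq (le_max_right b 0)).symm]
        exact Real.sqrt_le_sqrt ha
      exact le_trans (le_max_left b 0) this
    have := intervalIntegral_tendsto_integral_Ioi 0 hInt hsqrt
    exact this.congr' (hkey.mono fun x hx => hx.symm)
end
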